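/- Let ψ be a fixed probability density on ℝ^d, and for a vector m ∈ ℝ^d and a positive-definite d×d matrix C define the location-scale density q_{m,C}(θ) = det(C)^{−1/2} ψ(C^{−1/2}(θ − m)). If ℓ : ℝ^d → ℝ is convex, then the map (m, C^{1/2}) ↦ E_{θ∼q_{m,C}}[ℓ(θ)] is convex. Moreover, if ℓ is H-strongly convex and ψ is the density of a centered random variable with identity covariance, then this map is H-strongly convex. -/

import Mathlib

open MeasureTheory

variable {d : ℕ}

/-- The expected loss of a location-scale family, `E_{u∼ψ}[ℓ(m + S u)]`,
viewed as a function of the parameter `(m, S)` (with `S = C^{1/2}`) packed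
into a Euclidean space. -/
noncomputable def locScaleLoss (ℓ : EuclideanSpace ℝ (Fin d) → ℝ)
    (ψ : Measure (EuclideanSpace ℝ (Fin d)))
    (p : EuclideanSpace ℝ (Fin d ⊕ Fin d × Fin d)) : ℝ :=
  ∫ u, ℓ (WithLp.toLp 2 (fun i => p (Sum.inl i) + ∑ j, p (Sum.inr (i, j)) * u j) :
    EuclideanSpace ℝ (Fin d)) ∂ψ

private noncomputable def lsMap (p : EuclideanSpace ℝ (Fin d ⊕ Fin d × Fin d))
    (u : EuclideanSpace ℝ (Fin d)) : EuclideanSpace ℝ (Fin d) :=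
  WithLp.toLp 2 (fun i => p (Sum.inl i) + ∑ j, p (Sum.inr (i, j)) * u j)

private lemma lsMap_smul_add (a b : ℝ) (p q : EuclideanSpace ℝ (Fin d ⊕ Fin d × Fin d))
    (u : EuclideanSpace ℝ (Fin d)) :
    lsMap (a • p + b • q) u = a • lsMap p u + b • lsMap q u := by
  ext i
  show (a • p + b • q) (Sum.inl i) + ∑ j, (a • p + b • q) (Sum.inr (i, j)) * u j
      = a * (p (Sum.inl i) + ∑ j, p (Sum.inr (i, j)) * u j)
      + b * (q (Sum.inl i) + ∑ j, q (Sum.inr (i, j)) * u j)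
  have h : ∀ x, (a • p + b • q) x = a * p x + b * q x := fun x => rfl
  simp only [h, add_mul, Finset.sum_add_distrib, mul_assoc, ← Finset.mul_sum]
  ring

private lemma lsMap_sub (p q : EuclideanSpace ℝ (Fin d ⊕ Fin d × Fin d))
    (u : EuclideanSpace ℝ (Fin d)) :
    lsMap p u - lsMap q u = lsMap (p - q) u := by
  ext i
  show (p (Sum.inl i) + ∑ j, p (Sum.inr (i, j)) * u j)
      - (q (Sum.inl i) + ∑ j, q (Sum.inr (i, j)) * u j)
      = (p - q) (Sum.inl i) + ∑ j, (p - q) (Sum.inr (i, j)) * u j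
  have h : ∀ x, (p - q) x = p x - q x := fun x => rfl
  simp only [h, sub_mul, Finset.sum_sub_distrib]
  ring

private lemma normsq {ι : Type*} [Fintype ι] (x : EuclideanSpace ℝ ι) :
    ‖x‖ ^ 2 = ∑ i, x i ^ 2 := by
  rw [EuclideanSpace.norm_eq, Real.sq_sqrt (by positivity)]
  simp [sq_abs]

private lemma moment_int (ψ : Measure (EuclideanSpace ℝ (Fin d))) [IsProbabilityMeasure ψ]
    (hm1 : ∀ i, ∫ u, (u : EuclideanSpace ℝ (Fin d)) i ∂ψ = 0)
    (hm2 : ∀ i j, ∫ u, (u : EuclideanSpace ℝ (Fin d)) i * u j ∂ψ = if i = j then 1 else 0)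
    (c : ℝ) (s : Fin d → ℝ) :
    Integrable (fun u : EuclideanSpace ℝ (Fin d) => (c + ∑ j, s j * u j) ^ 2) ψ ∧
    ∫ u, (c + ∑ j, s j * u j) ^ 2 ∂ψ = c ^ 2 + ∑ j, s j ^ 2 := by
  have intsq : ∀ j, Integrable (fun u : EuclideanSpace ℝ (Fin d) => u j * u j) ψ := by
    intro j
    by_contra h
    have := hm2 j j
    rw [integral_undef h] at this
    simp at this
  have int2 : ∀ i j, Integrable (fun u : EuclideanSpace ℝ (Fin d) => u i * u j) ψ := by
    intro i j
    refine Integrable.mono' (((intsq i).add (intsq j)).div_const 2)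
      (Continuous.aestronglyMeasurable (by fun_prop))
      (Filter.Eventually.of_forall fun u => ?_)
    simp only [Pi.add_apply]
    rw [Real.norm_eq_abs, abs_mul]
    nlinarith [sq_nonneg (|u i| - |u j|), sq_abs (u i), sq_abs (u j),
      abs_nonneg (u i), abs_nonneg (u j)]
  have int1 : ∀ j, Integrable (fun u : EuclideanSpace ℝ (Fin d) => u j) ψ := by
    intro j
    refine Integrable.mono' (((integrable_const 1).add (intsq j)).div_const 2)
      (Continuous.aestronglyMeasurable (by fun_prop)) (Filter.Eventually.of_forall fun u => ?_)
    simp only [Pi.add_apply]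
    rw [Real.norm_eq_abs]
    nlinarith [sq_nonneg (|u j| - 1), sq_abs (u j), abs_nonneg (u j)]
  have hfun : (fun u : EuclideanSpace ℝ (Fin d) => (c + ∑ j, s j * u j) ^ 2)
      = fun u => (c ^ 2 + ∑ j, (2 * c * s j) * u j)
        + ∑ jk : Fin d × Fin d, (s jk.1 * s jk.2) * (u jk.1 * u jk.2) := by
    funext u
    have h1 : (∑ j, s j * u j) * (∑ k, s k * u k)
        = ∑ jk : Fin d × Fin d, (s jk.1 * s jk.2) * (u jk.1 * u jk.2) := by
      rw [Finset.sum_mul_sum, Fintype.sum_prod_type]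
      exact Finset.sum_congr rfl fun j _ => Finset.sum_congr rfl fun k _ => by ring
    have h2 : (∑ j, (2 * c * s j) * u j) = 2 * c * ∑ j, s j * u j := by
      rw [Finset.mul_sum]
      exact Finset.sum_congr rfl fun j _ => by ring
    rw [h2, ← h1]
    ring
  have hintall : Integrable (fun u : EuclideanSpace ℝ (Fin d) =>
      (c ^ 2 + ∑ j, (2 * c * s j) * u j)
        + ∑ jk : Fin d × Fin d, (s jk.1 * s jk.2) * (u jk.1 * u jk.2)) ψ :=
    ((integrable_const _).add (integrable_finset_sum _ fun j _ => (int1 j).const_mul _)).add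
      (integrable_finset_sum _ fun jk _ => (int2 jk.1 jk.2).const_mul _)
  have Ilin : Integrable (fun u : EuclideanSpace ℝ (Fin d) => ∑ j, (2 * c * s j) * u j) ψ :=
    integrable_finset_sum _ fun j _ => (int1 j).const_mul _
  have Iquad : Integrable (fun u : EuclideanSpace ℝ (Fin d) =>
      ∑ jk : Fin d × Fin d, (s jk.1 * s jk.2) * (u jk.1 * u jk.2)) ψ :=
    integrable_finset_sum _ fun jk _ => (int2 jk.1 jk.2).const_mul _
  have Ic : Integrable (fun u : EuclideanSpace ℝ (Fin d) =>
      c ^ 2 + ∑ j, (2 * c * s j) * u j) ψ := (integrable_const _).add Ilin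
  have Icc : Integrable (fun _ : EuclideanSpace ℝ (Fin d) => c ^ 2) ψ := integrable_const _
  constructor
  · rw [hfun]; exact hintall
  · rw [hfun, integral_add Ic Iquad,
      integral_add Icc Ilin,
      integral_finset_sum _ (fun j _ => (int1 j).const_mul _),
      integral_finset_sum _ (fun jk _ => (int2 jk.1 jk.2).const_mul _)]
    simp only [integral_const_mul, hm1, hm2, mul_zero, Finset.sum_const_zero, add_zero,
      integral_const, measure_univ, ENNReal.toReal_one, probReal_univ, smul_eq_mul, one_mul]
    congr 1
    rw [Fintype.sum_prod_type]
    refine Finset.sum_congr rfl fun j _ => ?_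
    rw [Finset.sum_eq_single j]
    · simp [sq]
    · intro k _ hk
      simp [(Ne.symm hk)]
    · simp

/-- Convexity of the expected loss of a location-scale family in `(m, C^{1/2})`:
if `ℓ` is convex the map is convex; if moreover `ℓ` is `H`-strongly convex and
`ψ` is the law of a centered random variable with identity covariance, the map
is `H`-strongly convex. -/
theorem locScale_expected_loss_convex
    (ℓ : EuclideanSpace ℝ (Fin d) → ℝ)
    (ψ : Measure (EuclideanSpace ℝ (Fin d))) [IsProbabilityMeasure ψ]
    (hint : ∀ p : EuclideanSpace ℝ (Fin d ⊕ Fin d × Fin d),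
      Integrable (fun u : EuclideanSpace ℝ (Fin d) =>
        ℓ (WithLp.toLp 2 (fun i => p (Sum.inl i) + ∑ j, p (Sum.inr (i, j)) * u j) :
          EuclideanSpace ℝ (Fin d))) ψ) :
    (ConvexOn ℝ Set.univ ℓ → ConvexOn ℝ Set.univ (locScaleLoss ℓ ψ)) ∧
    (∀ H : ℝ, 0 < H → StrongConvexOn Set.univ H ℓ →
      (∀ i, ∫ u, (u : EuclideanSpace ℝ (Fin d)) i ∂ψ = 0) →
      (∀ i j, ∫ u, (u : EuclideanSpace ℝ (Fin d)) i * u j ∂ψ = if i = j then 1 else 0) →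
      StrongConvexOn Set.univ H (locScaleLoss ℓ ψ)) := by
  have hint' : ∀ p, Integrable (fun u => ℓ (lsMap p u)) ψ := hint
  have lsdef : ∀ p, locScaleLoss ℓ ψ p = ∫ u, ℓ (lsMap p u) ∂ψ := fun p => rfl
  constructor
  · intro hc
    refine ⟨convex_univ, fun p _ q _ a b ha hb hab => ?_⟩
    have key : ∀ u, ℓ (lsMap (a • p + b • q) u) ≤ a * ℓ (lsMap p u) + b * ℓ (lsMap q u) := by
      intro u
      rw [lsMap_smul_add]
      exact hc.2 (Set.mem_univ _) (Set.mem_univ _) ha hb hab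
    have hr : Integrable (fun u => a * ℓ (lsMap p u) + b * ℓ (lsMap q u)) ψ :=
      ((hint' p).const_mul a).add ((hint' q).const_mul b)
    calc locScaleLoss ℓ ψ (a • p + b • q) = ∫ u, ℓ (lsMap (a • p + b • q) u) ∂ψ := rfl
      _ ≤ ∫ u, (a * ℓ (lsMap p u) + b * ℓ (lsMap q u)) ∂ψ :=
          integral_mono (hint' _) hr key
      _ = a * ∫ u, ℓ (lsMap p u) ∂ψ + b * ∫ u, ℓ (lsMap q u) ∂ψ := by
          rw [integral_add ((hint' p).const_mul a) ((hint' q).const_mul b),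
            integral_const_mul, integral_const_mul]
      _ = a • locScaleLoss ℓ ψ p + b • locScaleLoss ℓ ψ q := rfl
  · intro H hH hsc hm1 hm2
    refine ⟨convex_univ, fun p _ q _ a b ha hb hab => ?_⟩
    set Δ : EuclideanSpace ℝ (Fin d ⊕ Fin d × Fin d) := p - q with hΔ
    have hnormu : ∀ u, ‖lsMap p u - lsMap q u‖ ^ 2
        = ∑ i, (Δ (Sum.inl i) + ∑ j, Δ (Sum.inr (i, j)) * u j) ^ 2 := by
      intro u
      rw [lsMap_sub, normsq]
      rfl
    have hquad_int : Integrable (fun u : EuclideanSpace ℝ (Fin d) =>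
        ∑ i, (Δ (Sum.inl i) + ∑ j, Δ (Sum.inr (i, j)) * u j) ^ 2) ψ :=
      integrable_finset_sum _ fun i _ =>
        (moment_int ψ hm1 hm2 (Δ (Sum.inl i)) (fun j => Δ (Sum.inr (i, j)))).1
    have hquad_val : ∫ u, ∑ i, (Δ (Sum.inl i) + ∑ j, Δ (Sum.inr (i, j)) * u j) ^ 2 ∂ψ
        = ‖p - q‖ ^ 2 := by
      rw [integral_finset_sum _ (fun i _ =>
        (moment_int ψ hm1 hm2 (Δ (Sum.inl i)) (fun j => Δ (Sum.inr (i, j)))).1)]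
      have : ∀ i ∈ Finset.univ, ∫ u, (Δ (Sum.inl i) + ∑ j, Δ (Sum.inr (i, j)) * u j) ^ 2 ∂ψ
          = Δ (Sum.inl i) ^ 2 + ∑ j, Δ (Sum.inr (i, j)) ^ 2 := fun i _ =>
        (moment_int ψ hm1 hm2 (Δ (Sum.inl i)) (fun j => Δ (Sum.inr (i, j)))).2
      rw [Finset.sum_congr rfl this, ← hΔ, normsq, Fintype.sum_sum_type,
        Fintype.sum_prod_type, ← Finset.sum_add_distrib]
    have key : ∀ u, ℓ (lsMap (a • p + b • q) u) ≤ a * ℓ (lsMap p u) + b * ℓ (lsMap q u)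
        - a * b * (H / 2 * ∑ i, (Δ (Sum.inl i) + ∑ j, Δ (Sum.inr (i, j)) * u j) ^ 2) := by
      intro u
      have h := hsc.2 (Set.mem_univ (lsMap p u)) (Set.mem_univ (lsMap q u)) ha hb hab
      rw [← lsMap_smul_add] at h
      simpa only [smul_eq_mul, hnormu u] using h
    have hr : Integrable (fun u => a * ℓ (lsMap p u) + b * ℓ (lsMap q u)
        - a * b * (H / 2 * ∑ i, (Δ (Sum.inl i) + ∑ j, Δ (Sum.inr (i, j)) * u j) ^ 2)) ψ :=
      (((hint' p).const_mul a).add ((hint' q).const_mul b)).sub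
        ((hquad_int.const_mul (H / 2)).const_mul (a * b))
    calc locScaleLoss ℓ ψ (a • p + b • q) = ∫ u, ℓ (lsMap (a • p + b • q) u) ∂ψ := rfl
      _ ≤ ∫ u, (a * ℓ (lsMap p u) + b * ℓ (lsMap q u)
          - a * b * (H / 2 * ∑ i, (Δ (Sum.inl i) + ∑ j, Δ (Sum.inr (i, j)) * u j) ^ 2)) ∂ψ :=
          integral_mono (hint' _) hr key
      _ = a * ∫ u, ℓ (lsMap p u) ∂ψ + b * ∫ u, ℓ (lsMap q u) ∂ψ
          - a * b * (H / 2 * ‖p - q‖ ^ 2) := by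
          have hIa : Integrable (fun u => a * ℓ (lsMap p u) + b * ℓ (lsMap q u)) ψ :=
            ((hint' p).const_mul a).add ((hint' q).const_mul b)
          have hIb : Integrable (fun u : EuclideanSpace ℝ (Fin d) => a * b *
              (H / 2 * ∑ i, (Δ (Sum.inl i) + ∑ j, Δ (Sum.inr (i, j)) * u j) ^ 2)) ψ :=
            (hquad_int.const_mul (H / 2)).const_mul (a * b)
          rw [integral_sub hIa hIb,
            integral_add ((hint' p).const_mul a) ((hint' q).const_mul b),
            integral_const_mul, integral_const_mul, integral_const_mul, integral_const_mul,
            hquad_val]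
      _ = a • locScaleLoss ℓ ψ p + b • locScaleLoss ℓ ψ q
          - a * b * (H / 2 * ‖p - q‖ ^ 2) := rfl
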